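/- For all integers s ≥ 4 and t ≥ 2, the set R = {(0,0), (1,0), (s−1,0)} is an outer multiset resolving set of the grid graph P_s □ P_t. -/

import Mathlib

open SimpleGraph

/-- The multiset representation of `u` with respect to `S`: the multiset of
distances from `u` to the vertices of `S`, counted with multiplicity. -/
noncomputable def mrep {V : Type*} (G : SimpleGraph V) (u : V) (S : Finset V) : Multiset ℕ :=
  S.val.map fun w => G.dist u w

/-- `S` is an outer multiset resolving set of `G`: the multiset representations of
the vertices outside `S` are pairwise distinct. -/
def IsOMR {V : Type*} (G : SimpleGraph V) (S : Finset V) : Prop :=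
  ∀ u ∉ S, ∀ v ∉ S, mrep G u S = mrep G v S → u = v

/-- The outer multiset dimension of `G`. -/
noncomputable def dimMS {V : Type*} (G : SimpleGraph V) [Fintype V] : ℕ :=
  sInf {n | ∃ S : Finset V, S.card = n ∧ IsOMR G S}

/-- The diameter of `G`: the largest distance between vertices of `G`. -/
noncomputable def gdiam {V : Type*} (G : SimpleGraph V) [Fintype V] : ℕ :=
  Finset.univ.sup fun p : V × V => G.dist p.1 p.2

lemma pathWalk_up (n : ℕ) : ∀ k (a : Fin n) (h : a.val + k < n),
    ∃ p : (pathGraph n).Walk a ⟨a.val + k, h⟩, p.length = k := by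
  intro k
  induction k with
  | zero =>
    intro a h
    exact ⟨Walk.nil.copy rfl (Fin.ext (by simp)), by simp⟩
  | succ k ih =>
    intro a h
    have hlt : a.val + 1 < n := by omega
    set a' : Fin n := ⟨a.val + 1, hlt⟩ with ha'
    have hadj : (pathGraph n).Adj a a' := pathGraph_adj.mpr (Or.inl rfl)
    obtain ⟨p, hp⟩ := ih a' (by simp [ha']; omega)
    refine ⟨(Walk.cons hadj p).copy rfl (Fin.ext (by simp [ha']; omega)), by simp [hp]⟩

lemma pathGraph_exists_walk (n : ℕ) (a b : Fin n) :
    ∃ p : (pathGraph n).Walk a b, p.length = Nat.dist a.val b.val := by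
  rcases le_total a.val b.val with hab | hab
  · obtain ⟨p, hp⟩ := pathWalk_up n (b.val - a.val) a (by omega)
    refine ⟨p.copy rfl (Fin.ext (by simp; omega)), ?_⟩
    simpa [Nat.dist_eq_sub_of_le hab] using hp
  · obtain ⟨p, hp⟩ := pathWalk_up n (a.val - b.val) b (by omega)
    refine ⟨(p.copy rfl (Fin.ext (by simp; omega))).reverse, ?_⟩
    simpa [Nat.dist_eq_sub_of_le_right hab] using hp

lemma walk_lower {V : Type*} {G : SimpleGraph V} (f g : V → ℕ)
    (h : ∀ a b, G.Adj a b → Nat.dist (f a) (f b) + Nat.dist (g a) (g b) ≤ 1)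
    {u v : V} (p : G.Walk u v) :
    Nat.dist (f u) (f v) + Nat.dist (g u) (g v) ≤ p.length := by
  induction p with
  | nil => simp [Nat.dist_self]
  | @cons u w v hadj q ih =>
    have h1 := h _ _ hadj
    have t1 := Nat.dist.triangle_inequality (f u) (f w) (f v)
    have t2 := Nat.dist.triangle_inequality (g u) (g w) (g v)
    simp only [Walk.length_cons]
    omega

lemma grid_dist (s t : ℕ) (u v : Fin s × Fin t) :
    ((pathGraph s).boxProd (pathGraph t)).dist u v
      = Nat.dist u.1.val v.1.val + Nat.dist u.2.val v.2.val := by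
  obtain ⟨p1, hp1⟩ := pathGraph_exists_walk s u.1 v.1
  obtain ⟨p2, hp2⟩ := pathGraph_exists_walk t u.2 v.2
  have hub : ((pathGraph s).boxProd (pathGraph t)).dist u v
      ≤ Nat.dist u.1.val v.1.val + Nat.dist u.2.val v.2.val := by
    refine le_trans (SimpleGraph.dist_le
      ((p1.boxProdLeft (pathGraph t) u.2).append (Walk.boxProdRight (pathGraph s) v.1 p2))) ?_
    have e1 : (p1.boxProdLeft (pathGraph t) u.2).length = p1.length := Walk.length_map _ _
    have e2 : (Walk.boxProdRight (pathGraph s) v.1 p2).length = p2.length := Walk.length_map _ _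
    rw [Walk.length_append, e1, e2, hp1, hp2]
  have hr : ((pathGraph s).boxProd (pathGraph t)).Reachable u v :=
    ⟨(p1.boxProdLeft (pathGraph t) u.2).append (Walk.boxProdRight (pathGraph s) v.1 p2)⟩
  obtain ⟨q, hq⟩ := hr.exists_walk_length_eq_dist
  have hlb := walk_lower (G := (pathGraph s).boxProd (pathGraph t))
    (fun x => x.1.val) (fun x => x.2.val) ?_ q
  · have hlb' : Nat.dist u.1.val v.1.val + Nat.dist u.2.val v.2.val ≤ q.length := hlb
    omega
  · rintro ⟨a1, a2⟩ ⟨b1, b2⟩ hab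
    rcases SimpleGraph.boxProd_adj.mp hab with ⟨h1, h2⟩ | ⟨h1, h2⟩
    · have h3 : a1.val + 1 = b1.val ∨ b1.val + 1 = a1.val := pathGraph_adj.mp h1
      have h4 : a2.val = b2.val := congrArg Fin.val h2
      show Nat.dist a1.val b1.val + Nat.dist a2.val b2.val ≤ 1
      simp only [Nat.dist]
      omega
    · have h3 : a2.val + 1 = b2.val ∨ b2.val + 1 = a2.val := pathGraph_adj.mp h1
      have h4 : a1.val = b1.val := congrArg Fin.val h2
      show Nat.dist a1.val b1.val + Nat.dist a2.val b2.val ≤ 1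
      simp only [Nat.dist]
      omega

lemma key_arith (s i j k l : ℕ) (hs : 4 ≤ s) (hi : i < s) (hk : k < s)
    (f1a : i + j = k + l ∨ i + j = Nat.dist k 1 + l ∨ i + j = Nat.dist k (s-1) + l)
    (f2a : k + l = i + j ∨ k + l = Nat.dist i 1 + j ∨ k + l = Nat.dist i (s-1) + j)
    (f1s : i + j + (Nat.dist i 1 + j) + (Nat.dist i (s-1) + j)
         = k + l + (Nat.dist k 1 + l) + (Nat.dist k (s-1) + l)) :
    i = k ∧ j = l := by
  have hp : (Nat.dist i 1 : ℤ) = (i : ℤ) - 1 ∨ (Nat.dist i 1 : ℤ) = 1 - (i : ℤ) := by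
    simp [Nat.dist]; omega
  have hp' : (Nat.dist k 1 : ℤ) = (k : ℤ) - 1 ∨ (Nat.dist k 1 : ℤ) = 1 - (k : ℤ) := by
    simp [Nat.dist]; omega
  have hq : (Nat.dist i (s-1) : ℤ) = (s : ℤ) - 1 - (i : ℤ) := by
    simp [Nat.dist]; omega
  have hr : (Nat.dist k (s-1) : ℤ) = (s : ℤ) - 1 - (k : ℤ) := by
    simp [Nat.dist]; omega
  have F1 : (i:ℤ) + j = k + l ∨ (i:ℤ) + j = (Nat.dist k 1 : ℤ) + l
      ∨ (i:ℤ) + j = (Nat.dist k (s-1) : ℤ) + l := by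
    rcases f1a with h|h|h
    · exact Or.inl (by exact_mod_cast h)
    · exact Or.inr (Or.inl (by exact_mod_cast h))
    · exact Or.inr (Or.inr (by exact_mod_cast h))
  have F2 : (k:ℤ) + l = i + j ∨ (k:ℤ) + l = (Nat.dist i 1 : ℤ) + j
      ∨ (k:ℤ) + l = (Nat.dist i (s-1) : ℤ) + j := by
    rcases f2a with h|h|h
    · exact Or.inl (by exact_mod_cast h)
    · exact Or.inr (Or.inl (by exact_mod_cast h))
    · exact Or.inr (Or.inr (by exact_mod_cast h))
  have FS : (i:ℤ) + j + ((Nat.dist i 1 : ℤ) + j) + ((Nat.dist i (s-1) : ℤ) + j)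
      = (k:ℤ) + l + ((Nat.dist k 1 : ℤ) + l) + ((Nat.dist k (s-1) : ℤ) + l) := by
    exact_mod_cast f1s
  omega

lemma triple_facts {a b c d e f : ℕ} (h : (a ::ₘ b ::ₘ {c}) = (d ::ₘ e ::ₘ {f} : Multiset ℕ)) :
    (a = d ∨ a = e ∨ a = f) ∧ (d = a ∨ d = b ∨ d = c) ∧ a + b + c = d + e + f := by
  refine ⟨?_, ?_, ?_⟩
  · have : a ∈ (d ::ₘ e ::ₘ {f} : Multiset ℕ) := h ▸ by simp
    simpa using this
  · have : d ∈ (a ::ₘ b ::ₘ {c} : Multiset ℕ) := h.symm ▸ by simp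
    simpa using this
  · have := congrArg Multiset.sum h
    simpa [add_assoc] using this

theorem stmt_18 (s t : ℕ) (hs : 4 ≤ s) (ht : 2 ≤ t) :
    IsOMR ((pathGraph s).boxProd (pathGraph t))
      ({((⟨0, by omega⟩ : Fin s), (⟨0, by omega⟩ : Fin t)),
        ((⟨1, by omega⟩ : Fin s), (⟨0, by omega⟩ : Fin t)),
        ((⟨s - 1, by omega⟩ : Fin s), (⟨0, by omega⟩ : Fin t))} : Finset (Fin s × Fin t)) := by
  intro u hu v hv h
  set G := (pathGraph s).boxProd (pathGraph t) with hG
  set A : Fin s × Fin t := ((⟨0, by omega⟩ : Fin s), (⟨0, by omega⟩ : Fin t)) with hA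
  set B : Fin s × Fin t := ((⟨1, by omega⟩ : Fin s), (⟨0, by omega⟩ : Fin t)) with hB
  set C : Fin s × Fin t := ((⟨s - 1, by omega⟩ : Fin s), (⟨0, by omega⟩ : Fin t)) with hC
  have hval : ({A, B, C} : Finset (Fin s × Fin t)).val = (A ::ₘ B ::ₘ {C}) := by
    rw [Finset.insert_val_of_notMem (by simp [hA, hB, hC, Prod.ext_iff, Fin.ext_iff]; omega),
      Finset.insert_val_of_notMem (by simp [hB, hC, Prod.ext_iff, Fin.ext_iff]; omega)]
    rfl
  have dA : ∀ w : Fin s × Fin t, G.dist w A = w.1.val + w.2.val := by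
    intro w; rw [hG, grid_dist]; simp [hA, Nat.dist]
  have dB : ∀ w : Fin s × Fin t, G.dist w B = Nat.dist w.1.val 1 + w.2.val := by
    intro w; rw [hG, grid_dist]; simp [hB, Nat.dist]
  have dC : ∀ w : Fin s × Fin t, G.dist w C = Nat.dist w.1.val (s - 1) + w.2.val := by
    intro w; rw [hG, grid_dist]; simp [hC, Nat.dist]
  unfold mrep at h
  rw [hval] at h
  simp only [Multiset.map_cons, Multiset.map_singleton, dA, dB, dC] at h
  obtain ⟨f1a, f2a, f1s⟩ := triple_facts h
  have key := key_arith s u.1.val u.2.val v.1.val v.2.val hs u.1.isLt v.1.isLt f1a f2a f1s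
  exact Prod.ext (Fin.ext key.1) (Fin.ext key.2)
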